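/- Let f be twice differentiable in x with m·I ⪯ ∇ₓₓf(x;t) ⪯ L₁·I and ‖∇_{tx}f(x;t)‖ ≤ L₂ for all x, t. Define the recentered function f̌(x;t) := f(x;t) − ∇ₜf(y;t)|_{y=x*(t)} integrated appropriately, so that ∇ₜf̌(x;t) = ∇ₜf(x;t) − ∇ₜf(y;t)|_{y=x*(t)} and ∇ₓf̌ = ∇ₓf. Then for all x ≠ x*(t), |∇ₜf̌(x;t)| / ‖∇ₓf̌(x;t)‖ ≤ L₂/m, i.e., |∇ₜf̌(x;t)| ≤ (L₂/m) ‖∇ₓf̌(x;t)‖. -/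

import Mathlib

/-- Part (b) of Proposition 1: for an m-strongly-convex objective with
‖∇_{tx}f‖ ≤ L₂, the recentered time derivative satisfies
|∇ₜf(x;t) − ∇ₜf(x*(t);t)| ≤ (L₂/m)‖∇ₓf(x;t)‖. -/
theorem stmt_10 {d : ℕ}
    (f : EuclideanSpace ℝ (Fin d) → ℝ → ℝ)
    (gx : EuclideanSpace ℝ (Fin d) → ℝ → EuclideanSpace ℝ (Fin d))
    (gt : EuclideanSpace ℝ (Fin d) → ℝ → ℝ)
    (m L₁ L₂ : ℝ) (hm : 0 < m) (hmL : m ≤ L₁) (hL₂ : 0 ≤ L₂)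
    (hgrad : ∀ (t : ℝ) (x : EuclideanSpace ℝ (Fin d)),
      HasGradientAt (fun y => f y t) (gx x t) x)
    (hgt : ∀ (x : EuclideanSpace ℝ (Fin d)) (t : ℝ),
      HasDerivAt (fun s => f x s) (gt x t) t)
    (hsc : ∀ (t : ℝ) (x y : EuclideanSpace ℝ (Fin d)),
      m * ‖x - y‖ ^ 2 ≤ (inner ℝ (gx x t - gx y t) (x - y) : ℝ))
    (hlipg : ∀ (t : ℝ) (x y : EuclideanSpace ℝ (Fin d)),
      ‖gx x t - gx y t‖ ≤ L₁ * ‖x - y‖)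
    (htx : ∀ (t : ℝ) (x y : EuclideanSpace ℝ (Fin d)),
      |gt x t - gt y t| ≤ L₂ * ‖x - y‖)
    (xstar : ℝ → EuclideanSpace ℝ (Fin d))
    (hstat : ∀ t : ℝ, gx (xstar t) t = 0)
    (hmin : ∀ (t : ℝ) (x : EuclideanSpace ℝ (Fin d)), f (xstar t) t ≤ f x t) :
    ∀ (x : EuclideanSpace ℝ (Fin d)) (t : ℝ), x ≠ xstar t →
      |gt x t - gt (xstar t) t| ≤ (L₂ / m) * ‖gx x t‖ := by
  intro x t hx
  have hkey : m * ‖x - xstar t‖ ≤ ‖gx x t‖ := by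
    have h1 := hsc t x (xstar t)
    rw [hstat t, sub_zero] at h1
    have h2 : (inner ℝ (gx x t) (x - xstar t) : ℝ) ≤ ‖gx x t‖ * ‖x - xstar t‖ :=
      real_inner_le_norm _ _
    have hnx : 0 < ‖x - xstar t‖ := by
      rw [norm_pos_iff, sub_ne_zero]; exact hx
    nlinarith [h1, h2, sq_nonneg (‖x - xstar t‖)]
  calc |gt x t - gt (xstar t) t| ≤ L₂ * ‖x - xstar t‖ := htx t x (xstar t)
    _ ≤ (L₂ / m) * ‖gx x t‖ := by
        rw [div_mul_eq_mul_div, le_div_iff₀ hm]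
        calc L₂ * ‖x - xstar t‖ * m = L₂ * (m * ‖x - xstar t‖) := by ring
          _ ≤ L₂ * ‖gx x t‖ := by
              exact mul_le_mul_of_nonneg_left hkey hL₂
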